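/- The group A = ⟨a, b | b³ = 1, a⁻¹ba = b⁻¹⟩ is generated by the two elements a³ and a²b. -/
import Mathlib

/-- Generators of the group `A = ⟨a, b | b³ = 1, a⁻¹ba = b⁻¹⟩`. -/
inductive Gen : Type
  | a
  | b

/-- Relators: `b³` and `a⁻¹bab` (the latter encodes `a⁻¹ba = b⁻¹`). -/
def rels : Set (FreeGroup Gen) :=
  {FreeGroup.of Gen.b ^ 3,
   (FreeGroup.of Gen.a)⁻¹ * FreeGroup.of Gen.b * FreeGroup.of Gen.a * FreeGroup.of Gen.b}

/-- The group `A = ⟨a, b | b³ = 1, a⁻¹ba = b⁻¹⟩`. -/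
abbrev A := PresentedGroup rels

def a : A := PresentedGroup.of Gen.a
def b : A := PresentedGroup.of Gen.b

lemma rel_one_of_mem {r : FreeGroup Gen} (hr : r ∈ rels) :
    (PresentedGroup.mk rels r : A) = 1 :=
  (QuotientGroup.eq_one_iff r).mpr (Subgroup.subset_normalClosure hr)

lemma rel2 : a⁻¹ * b * a * b = 1 := by
  have := rel_one_of_mem (r := (FreeGroup.of Gen.a)⁻¹ * FreeGroup.of Gen.b *
    FreeGroup.of Gen.a * FreeGroup.of Gen.b) (by right; rfl)
  simpa [a, b, PresentedGroup.of] using this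

lemma key : a * b * a⁻¹ = b⁻¹ := by
  have h : a⁻¹ * b * a = b⁻¹ := by
    have h2 := rel2
    calc a⁻¹ * b * a = a⁻¹ * b * a * b * b⁻¹ := by group
    _ = 1 * b⁻¹ := by rw [h2]
    _ = b⁻¹ := one_mul _
  have h2 : a * b⁻¹ * a⁻¹ = b := by
    calc a * b⁻¹ * a⁻¹ = a * (a⁻¹ * b * a) * a⁻¹ := by rw [h]
    _ = b := by group
  calc a * b * a⁻¹ = (a * b⁻¹ * a⁻¹)⁻¹ := by group
  _ = b⁻¹ := by rw [h2]

/-- `A = ⟨a, b | b³ = 1, a⁻¹ba = b⁻¹⟩` is generated by the elements `a³` and `a²b`. -/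
theorem A_generated_by_x_y :
    Subgroup.closure ({a ^ 3, a ^ 2 * b} : Set A) = ⊤ := by
  rw [eq_top_iff]
  intro x _
  refine PresentedGroup.generated_by rels _ (fun j => ?_) x
  have hx : (a ^ 3 : A) ∈ Subgroup.closure ({a ^ 3, a ^ 2 * b} : Set A) :=
    Subgroup.subset_closure (by left; rfl)
  have hy : (a ^ 2 * b : A) ∈ Subgroup.closure ({a ^ 3, a ^ 2 * b} : Set A) :=
    Subgroup.subset_closure (by right; rfl)
  have ha : (a : A) ∈ Subgroup.closure ({a ^ 3, a ^ 2 * b} : Set A) := by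
    have step1 : a ^ 3 * ((a ^ 3)⁻¹ * (a ^ 2 * b)) ^ 2 = a * (a * b * a⁻¹) * b := by
      simp only [mul_pow, sq, mul_inv_rev, pow_succ, pow_zero, one_mul, mul_assoc,
        inv_mul_cancel_left, mul_inv_cancel_left]
    have heq : a ^ 3 * ((a ^ 3)⁻¹ * (a ^ 2 * b)) ^ 2 = a := by
      calc a ^ 3 * ((a ^ 3)⁻¹ * (a ^ 2 * b)) ^ 2 = a * (a * b * a⁻¹) * b := step1
      _ = a * b⁻¹ * b := by rw [key]
      _ = a := by group
    have := mul_mem hx (pow_mem (mul_mem (inv_mem hx) hy) 2)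
    rwa [heq] at this
  have hb : (b : A) ∈ Subgroup.closure ({a ^ 3, a ^ 2 * b} : Set A) := by
    have heq : (a ^ 2)⁻¹ * (a ^ 2 * b) = b := by group
    have := mul_mem (inv_mem (pow_mem ha 2)) hy
    rwa [heq] at this
  cases j
  · exact ha
  · exact hb
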